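/- Let A be a real n×m matrix with n < m satisfying the URP, let 1 ≤ n0 ≤ n, let γ = γ_A(n0) (finite and positive), let γ′ > γ, and let σ > 0. Set λ′_max = 2/(1+γ) and λ′_min = 2(γ′−γ)/((1+γ)(γ′+γ′²)). Then: (a) for every s ∈ ℝ^m and every w ∈ ℝ^m with A w = 0, −Σ_{i=1}^m g_{γ′}(s_i/σ)·w_i² ≤ λ′_max·‖w‖²; and (b) if moreover ‖s‖_{0,σ} ≤ n0, then −Σ_{i=1}^m g_{γ′}(s_i/σ)·w_i² ≥ λ′_min·‖w‖² for every w ∈ ℝ^m with A w = 0. (Equivalently, the eigenvalues of the matrix −σ²·D·H(s)·Dᵀ, where H(s) is the diagonal Hessian of F_{γ′,σ} at s and the rows of D form an orthonormal basis of null(A), are at most λ′_max always and at least λ′_min when ‖s‖_{0,σ} ≤ n0.) -/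
import Mathlib


open Finset
open scoped BigOperators

noncomputable section

/-- Squared Euclidean norm of a vector. -/
def nsq {ι : Type*} [Fintype ι] (s : ι → ℝ) : ℝ := ∑ i, (s i) ^ 2

/-- The Unique Representation Property: every `n × n` submatrix of `A` is invertible. -/
def URP {n m : ℕ} (A : Matrix (Fin n) (Fin m) ℝ) : Prop :=
  ∀ g : Fin n → Fin m, Function.Injective g → IsUnit (A.submatrix id g)

/-- Number of nonzero components (the ℓ⁰ "norm"). -/
def l0 {ι : Type*} [Fintype ι] (s : ι → ℝ) : ℕ :=
  (Finset.univ.filter fun i => s i ≠ 0).card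

/-- Number of components with absolute value greater than σ. -/
def l0s {ι : Type*} [Fintype ι] (s : ι → ℝ) (σ : ℝ) : ℕ :=
  (Finset.univ.filter fun i => σ < |s i|).card

/-- The set of ratios ‖π_I(s)‖²/‖π_{Iᶜ}(s)‖² over index sets `I` with `|I| ≤ n0`
and nonzero null-space vectors `s`. -/
def gammaSet {n m : ℕ} (A : Matrix (Fin n) (Fin m) ℝ) (n0 : ℕ) : Set ℝ :=
  {r | ∃ (I : Finset (Fin m)) (s : Fin m → ℝ), I.card ≤ n0 ∧ A.mulVec s = 0 ∧ s ≠ 0 ∧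
    r = (∑ i ∈ I, (s i) ^ 2) / (∑ i ∈ Iᶜ, (s i) ^ 2)}

/-- γ_A(n0), the supremum of the above set of ratios. -/
def gammaA {n m : ℕ} (A : Matrix (Fin n) (Fin m) ℝ) (n0 : ℕ) : ℝ :=
  sSup (gammaSet A n0)

/-- Square of the largest singular value of a matrix (Rayleigh quotient form). -/
def sMaxSq {p q : Type*} [Fintype p] [Fintype q] (B : Matrix p q ℝ) : ℝ :=
  sSup {r | ∃ v : q → ℝ, nsq v = 1 ∧ r = nsq (B.mulVec v)}

/-- Square of the smallest singular value of a matrix with at least as many rows as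
columns (Rayleigh quotient form). -/
def sMinSq {p q : Type*} [Fintype p] [Fintype q] (B : Matrix p q ℝ) : ℝ :=
  sInf {r | ∃ v : q → ℝ, nsq v = 1 ∧ r = nsq (B.mulVec v)}

/-- The quadratic spline f_γ. -/
def fsp (γ u : ℝ) : ℝ :=
  if |u| ≤ 1 then 1 - u ^ 2 / (1 + γ)
  else if |u| ≤ 1 + γ then (|u| - γ - 1) ^ 2 / (γ ^ 2 + γ)
  else 0

/-- F_{γ,σ}(s) = Σ_i f_γ(s_i/σ). -/
def Fsp {m : ℕ} (γ σ : ℝ) (s : Fin m → ℝ) : ℝ := ∑ i, fsp γ (s i / σ)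

/-- The piecewise second derivative g_γ of f_γ. -/
def gsp (γ u : ℝ) : ℝ :=
  if |u| ≤ 1 then -2 / (1 + γ)
  else if |u| ≤ 1 + γ then 2 / (γ ^ 2 + γ)
  else 0

/-- The derivative f_γ′. -/
def fspDeriv (γ u : ℝ) : ℝ :=
  if |u| ≤ 1 then -2 * u / (1 + γ)
  else if |u| ≤ 1 + γ then 2 * (|u| - γ - 1) / (γ ^ 2 + γ) * Real.sign u
  else 0

/-- The gradient of F_{γ,σ}: its i-th component is (1/σ)·f_γ′(s_i/σ). -/
def gradF {m : ℕ} (γ σ : ℝ) (s : Fin m → ℝ) : Fin m → ℝ :=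
  fun i => fspDeriv γ (s i / σ) / σ

/-- The lower asymmetric restricted isometry constant δ_k^{min} of `A`. -/
def aricMin {n m : ℕ} (A : Matrix (Fin n) (Fin m) ℝ) (k : ℕ) : ℝ :=
  sInf {δ : ℝ | 0 ≤ δ ∧ ∀ s : Fin m → ℝ, l0 s ≤ k → (1 - δ) * nsq s ≤ nsq (A.mulVec s)}

end


section Aux

lemma key_arith (γ γ' a b : ℝ) (h0 : 0 < γ) (h1 : γ < γ')
    (hba : b ≤ γ * a) :
    2 * (γ' - γ) / ((1 + γ) * (γ' + γ' ^ 2)) * (a + b) ≤ 2 / (1 + γ') * a - 2 / (γ' ^ 2 + γ') * b := by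
  have hγ'0 : 0 < γ' := h0.trans h1
  have hd3 : 0 < (1 + γ) * (γ' + γ' ^ 2) := by positivity
  rw [div_mul_eq_mul_div, div_le_iff₀ hd3]
  have he : (2 / (1 + γ') * a - 2 / (γ' ^ 2 + γ') * b) * ((1 + γ) * (γ' + γ' ^ 2))
      = 2 * γ' * (1 + γ) * a - 2 * (1 + γ) * b := by
    have h1' : (1 : ℝ) + γ' ≠ 0 := by positivity
    have h2' : γ' ^ 2 + γ' ≠ 0 := by positivity
    field_simp
    ring
  rw [he]
  nlinarith [mul_nonneg (le_of_lt (by positivity : (0:ℝ) < 1 + γ')) (sub_nonneg.mpr hba)]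

lemma gsp_ub (γ' u : ℝ) (h : 0 < γ') : gsp γ' u ≤ 2 / (γ' ^ 2 + γ') := by
  unfold gsp
  split_ifs with h1 h2
  · have : (0:ℝ) < 2 / (γ' ^ 2 + γ') := by positivity
    have : -2 / (1 + γ') < 0 := by
      apply div_neg_of_neg_of_pos <;> linarith
    linarith
  · exact le_refl _
  · positivity

lemma gsp_lb (γ γ' u : ℝ) (h0 : 0 < γ) (h1 : γ < γ') : -(2 / (1 + γ)) ≤ gsp γ' u := by
  have hγ'0 : 0 < γ' := h0.trans h1
  have hkey : 2 / (1 + γ') ≤ 2 / (1 + γ) := by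
    apply div_le_div_of_nonneg_left (by norm_num) (by linarith) (by linarith)
  unfold gsp
  split_ifs with hA hB
  · rw [neg_div]; linarith
  · have : (0:ℝ) ≤ 2 / (γ' ^ 2 + γ') := by positivity
    have : (0:ℝ) < 2 / (1 + γ) := by positivity
    linarith
  · have : (0:ℝ) < 2 / (1 + γ) := by positivity
    linarith

/-- A null-space vector supported on at most `n` coordinates is zero, given URP. -/
lemma urp_null {n m : ℕ} (hnm : n < m) (A : Matrix (Fin n) (Fin m) ℝ) (hURP : URP A)
    (w : Fin m → ℝ) (hw : A.mulVec w = 0) (I : Finset (Fin m)) (hI : I.card ≤ n)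
    (hsupp : ∀ i, i ∉ I → w i = 0) : w = 0 := by
  obtain ⟨J, hIJ, -, hJcard⟩ := Finset.exists_subsuperset_card_eq (Finset.subset_univ I) hI
    (by simp only [Finset.card_univ, Fintype.card_fin]; omega)
  set e := J.orderIsoOfFin hJcard with he
  set g : Fin n → Fin m := fun k => (e k : Fin m) with hg
  have hginj : Function.Injective g := fun a b hab => e.injective (Subtype.ext hab)
  have hU : IsUnit (A.submatrix id g) := hURP g hginj
  have hinj := Matrix.mulVec_injective_iff_isUnit.mpr hU
  have hz : (A.submatrix id g).mulVec (w ∘ g) = 0 := by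
    funext k
    have : (A.submatrix id g).mulVec (w ∘ g) k = ∑ j ∈ J, A k j * w j := by
      rw [Matrix.mulVec, dotProduct]
      simp only [Matrix.submatrix_apply, id, Function.comp]
      rw [← Finset.sum_attach J (fun j => A k j * w j)]
      exact Fintype.sum_equiv e.toEquiv _ _ (fun i => rfl)
    rw [this]
    have h2 : ∑ j ∈ J, A k j * w j = ∑ j, A k j * w j := by
      apply Finset.sum_subset (Finset.subset_univ J)
      intro x _ hx
      rw [hsupp x (fun hmem => hx (hIJ hmem)), mul_zero]
    have h3 : ∑ j, A k j * w j = 0 := by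
      have := congrFun hw k
      simpa [Matrix.mulVec, dotProduct] using this
    simp [h2, h3]
  have hwg : w ∘ g = 0 := hinj (by simpa using hz)
  funext i
  by_cases hiJ : i ∈ J
  · obtain ⟨k, hk⟩ := e.surjective ⟨i, hiJ⟩
    have hgk : g k = i := congrArg Subtype.val hk
    have h0 := congrFun hwg k
    rw [Function.comp_apply, hgk] at h0
    simpa using h0
  · exact hsupp i (fun hmem => hiJ (hIJ hmem))

end Aux

/-- eigenvalue bounds for the projected Hessian of F_{γ′,σ}: the quadratic
form −Σ g_{γ′}(s_i/σ)w_i² on the null space of A is at most λ′_max·‖w‖² always, and at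
least λ′_min·‖w‖² when at most n0 components of s exceed σ. -/
theorem stmt_17 {n m : ℕ} (hnm : n < m) (A : Matrix (Fin n) (Fin m) ℝ)
    (hURP : URP A) (n0 : ℕ) (hn1 : 1 ≤ n0) (hn0 : n0 ≤ n)
    (γ : ℝ) (hγ : γ = gammaA A n0) (hγpos : 0 < γ) (hbdd : BddAbove (gammaSet A n0))
    (γ' : ℝ) (hγ' : γ < γ') (σ : ℝ) (hσ : 0 < σ) :
    (∀ (s w : Fin m → ℝ), A.mulVec w = 0 →
      -∑ i, gsp γ' (s i / σ) * (w i) ^ 2 ≤ 2 / (1 + γ) * nsq w) ∧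
    ∀ (s w : Fin m → ℝ), l0s s σ ≤ n0 → A.mulVec w = 0 →
      2 * (γ' - γ) / ((1 + γ) * (γ' + γ' ^ 2)) * nsq w ≤
        -∑ i, gsp γ' (s i / σ) * (w i) ^ 2 := by
  have hγ'0 : 0 < γ' := hγpos.trans hγ'
  constructor
  · intro s w _
    have hrw : 2 / (1 + γ) * nsq w = ∑ i, 2 / (1 + γ) * (w i) ^ 2 := by
      rw [nsq, Finset.mul_sum]
    rw [hrw, ← Finset.sum_neg_distrib]
    apply Finset.sum_le_sum
    intro i _
    have hg := gsp_lb γ γ' (s i / σ) hγpos hγ'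
    nlinarith [sq_nonneg (w i)]
  · intro s w hl0 hw
    set I : Finset (Fin m) := Finset.univ.filter (fun i => σ < |s i|) with hI
    set a : ℝ := ∑ i ∈ Iᶜ, (w i) ^ 2 with ha
    set b : ℝ := ∑ i ∈ I, (w i) ^ 2 with hb
    have ha0 : 0 ≤ a := Finset.sum_nonneg fun i _ => sq_nonneg _
    have hb0 : 0 ≤ b := Finset.sum_nonneg fun i _ => sq_nonneg _
    have hnsq : nsq w = b + a := (Finset.sum_add_sum_compl I _).symm
    have hIcard : I.card ≤ n0 := hl0
    have hba : b ≤ γ * a := by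
      by_cases hw0 : w = 0
      · simp [ha, hb, hw0]
      · have hapos : 0 < a := by
          rcases lt_or_eq_of_le ha0 with h | h
          · exact h
          · exfalso
            have hzero : ∀ i ∈ Iᶜ, (w i) ^ 2 = 0 := by
              intro i hi
              have := (Finset.sum_eq_zero_iff_of_nonneg
                (fun i _ => sq_nonneg (w i))).mp h.symm
              exact this i hi
            have hsupp : ∀ i, i ∉ I → w i = 0 := by
              intro i hi
              have := hzero i (Finset.mem_compl.mpr hi)
              exact pow_eq_zero_iff (by norm_num) |>.mp this
            exact hw0 (urp_null hnm A hURP w hw I (hIcard.trans hn0) hsupp)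
        have hmem : b / a ∈ gammaSet A n0 := ⟨I, w, hIcard, hw, hw0, rfl⟩
        have hle : b / a ≤ γ := hγ ▸ le_csSup hbdd hmem
        calc b = (b / a) * a := by field_simp
        _ ≤ γ * a := mul_le_mul_of_nonneg_right hle ha0
    have hS : 2 / (1 + γ') * a - 2 / (γ' ^ 2 + γ') * b ≤
        -∑ i, gsp γ' (s i / σ) * (w i) ^ 2 := by
      rw [← Finset.sum_neg_distrib,
        ← Finset.sum_add_sum_compl I (fun i => -(gsp γ' (s i / σ) * (w i) ^ 2))]
      have hIc : ∑ i ∈ Iᶜ, -(gsp γ' (s i / σ) * (w i) ^ 2) = 2 / (1 + γ') * a := by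
        rw [ha, Finset.mul_sum]
        apply Finset.sum_congr rfl
        intro i hi
        have hni : ¬ σ < |s i| := by
          have := Finset.mem_compl.mp hi
          simpa [hI] using this
        have habs : |s i / σ| ≤ 1 := by
          rw [abs_div, abs_of_pos hσ, div_le_one hσ]; linarith
        rw [gsp, if_pos habs]; ring
      have hIb : -(2 / (γ' ^ 2 + γ')) * b ≤ ∑ i ∈ I, -(gsp γ' (s i / σ) * (w i) ^ 2) := by
        have hrw : -(2 / (γ' ^ 2 + γ')) * b = ∑ i ∈ I, -(2 / (γ' ^ 2 + γ') * (w i) ^ 2) := by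
          rw [hb, Finset.mul_sum]
          exact Finset.sum_congr rfl fun i _ => by ring
        rw [hrw]
        apply Finset.sum_le_sum
        intro i _
        have := gsp_ub γ' (s i / σ) hγ'0
        nlinarith [sq_nonneg (w i)]
      linarith
    calc 2 * (γ' - γ) / ((1 + γ) * (γ' + γ' ^ 2)) * nsq w
        ≤ 2 / (1 + γ') * a - 2 / (γ' ^ 2 + γ') * b := by
          rw [hnsq]
          have := key_arith γ γ' a b hγpos hγ' hba
          linarith
      _ ≤ -∑ i, gsp γ' (s i / σ) * (w i) ^ 2 := hS
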